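/- Let f_1 > f_c > 0 be real numbers and set c = f_c/f_1. Let p/q be an irreducible fraction (q ≥ 1, gcd(p,q) = 1) with canonical continued fraction expansion [a_0; a_1, …, a_n]. Let S(p/q) be the set of real numbers ν such that p/q is the n-th convergent of ν and, denoting by x_{n+1} the (n+1)-st partial quotient of ν, the chained inequality |ν − p/q| ≤ c/q ≤ 1/(x_{n+1} q²) holds. Then S(p/q) is nonempty if and only if q ≤ ⌊f_1/f_c⌋, where ⌊·⌋ denotes the integer part. -/

import Mathlib

/-- One step of the Gauss continued-fraction algorithm (returns `0` upon termination). -/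
noncomputable def cfStep (y : ℝ) : ℝ := if Int.fract y = 0 then 0 else (Int.fract y)⁻¹

/-- Iterates of the Gauss map used to compute the canonical continued fraction of `x`. -/
noncomputable def cfIter (x : ℝ) : ℕ → ℝ
  | 0 => x
  | n + 1 => cfStep (cfIter x n)

/-- The `n`-th partial quotient of the canonical continued fraction expansion of `x`
(by convention it is `0` past the end of a finite expansion). -/
noncomputable def pquot (x : ℝ) (n : ℕ) : ℤ := ⌊cfIter x n⌋

/-- Value of a finite continued fraction `[a₀; a₁, …, aₙ]`. -/
noncomputable def cfEval : List ℤ → ℝ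
  | [] => 0
  | [a] => (a : ℝ)
  | a :: l => (a : ℝ) + (cfEval l)⁻¹

/-- The canonical continued fraction expansion of `x` is exactly `[A 0; A 1, …, A n]`. -/
def IsCanonCF (x : ℝ) (A : ℕ → ℤ) (n : ℕ) : Prop :=
  (∀ i ≤ n, pquot x i = A i) ∧ Int.fract (cfIter x n) = 0 ∧ ∀ i < n, Int.fract (cfIter x i) ≠ 0

/-- The `n`-th convergent `pₙ/qₙ = [x₀; x₁, …, xₙ]` of `x`. -/
noncomputable def cfConv (x : ℝ) (n : ℕ) : ℝ := cfEval ((List.range (n + 1)).map (pquot x))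

open scoped Classical in
/-- The resolution map `r_a`: truncate the canonical continued fraction expansion just
before the first partial quotient `xᵢ` (`i ≥ 1`) with `xᵢ ≥ a`; identity otherwise. -/
noncomputable def ra (a : ℕ) (x : ℝ) : ℝ :=
  if h : ∃ i, 1 ≤ i ∧ (a : ℤ) ≤ pquot x i then
    cfEval ((List.range (Nat.find h)).map (pquot x))
  else x

/-- The locking zone `Z_a(r) = {x ∈ [0, a) : r_a(x) = r}`. -/
noncomputable def lockZone (a : ℕ) (r : ℝ) : Set ℝ :=
  {x | x ∈ Set.Ico (0 : ℝ) (a : ℝ) ∧ ra a x = r}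

/-- Right boundary `ν⁺` of a locking zone. -/
noncomputable def nuPlus (a : ℕ) (r : ℝ) : ℝ := sSup (lockZone a r)

/-- Left boundary `ν⁻` of a locking zone. -/
noncomputable def nuMinus (a : ℕ) (r : ℝ) : ℝ := sInf (lockZone a r)

set_option maxHeartbeats 1000000

-- auxiliary lemmas for `stmt_0`
lemma cfEval_cons (a : ℤ) (l : List ℤ) (hl : l ≠ []) :
    cfEval (a :: l) = (a : ℝ) + (cfEval l)⁻¹ := by
  match l with
  | [] => exact absurd rfl hl
  | b :: l' => rfl

noncomputable def Fcf : List ℤ → ℝ → ℝ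
  | [], s => s
  | a :: l, s => (a : ℝ) + (Fcf l s)⁻¹

lemma Fcf_nil (s : ℝ) : Fcf [] s = s := rfl

lemma Fcf_cons (a : ℤ) (l : List ℤ) (s : ℝ) : Fcf (a :: l) s = (a : ℝ) + (Fcf l s)⁻¹ := rfl

lemma Fcf_eq_cfEval (l : List ℤ) (b : ℤ) : Fcf l b = cfEval (l ++ [b]) := by
  induction l with
  | nil => simp [Fcf, cfEval]
  | cons a l ih => rw [List.cons_append, cfEval_cons _ _ (by simp), ← ih, Fcf_cons]

lemma Fcf_append (l₁ l₂ : List ℤ) (s : ℝ) : Fcf (l₁ ++ l₂) s = Fcf l₁ (Fcf l₂ s) := by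
  induction l₁ with
  | nil => rfl
  | cons a l ih => simp [Fcf_cons, ih]

lemma one_lt_Fcf (l : List ℤ) (h : ∀ a ∈ l, 1 ≤ a) (s : ℝ) (hs : 1 < s) : 1 < Fcf l s := by
  induction l with
  | nil => exact hs
  | cons a l ih =>
    have h1 : 1 < Fcf l s := ih (fun b hb => h b (List.mem_cons_of_mem _ hb))
    have ha : (1 : ℝ) ≤ (a : ℝ) := by exact_mod_cast h a List.mem_cons_self
    have hpos : 0 < (Fcf l s)⁻¹ := inv_pos.2 (lt_trans one_pos h1)
    rw [Fcf_cons]; linarith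

lemma inv_cfStep (y : ℝ) : (cfStep y)⁻¹ = Int.fract y := by
  unfold cfStep
  split
  · simp [*]
  · rw [inv_inv]

lemma cfIter_succ' (x : ℝ) (n : ℕ) : cfIter x (n + 1) = cfIter (cfStep x) n := by
  induction n with
  | zero => rfl
  | succ n ih => rw [show cfIter x (n + 2) = cfStep (cfIter x (n + 1)) from rfl, ih]; rfl

lemma pquot_succ (x : ℝ) (i : ℕ) : pquot x (i + 1) = pquot (cfStep x) i := by
  unfold pquot; rw [cfIter_succ']

lemma floor_step_Fcf (a : ℤ) (l : List ℤ) (s : ℝ) (h : ∀ b ∈ l, 1 ≤ b) (hs : 1 < s) :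
    ⌊Fcf (a :: l) s⌋ = a ∧ cfStep (Fcf (a :: l) s) = Fcf l s := by
  have h1 : 1 < Fcf l s := one_lt_Fcf l h s hs
  have hy0 : 0 < (Fcf l s)⁻¹ := inv_pos.2 (by linarith)
  have hy1 : (Fcf l s)⁻¹ < 1 := by
    rw [inv_lt_one_iff₀]; right; exact h1
  have hfr : Int.fract ((a : ℝ) + (Fcf l s)⁻¹) = (Fcf l s)⁻¹ := by
    rw [Int.fract_intCast_add, Int.fract_eq_self.2 ⟨le_of_lt hy0, hy1⟩]
  constructor
  · rw [Fcf_cons, Int.floor_intCast_add]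
    have : ⌊(Fcf l s)⁻¹⌋ = 0 := Int.floor_eq_zero_iff.2 ⟨le_of_lt hy0, hy1⟩
    omega
  · rw [Fcf_cons]
    unfold cfStep
    rw [hfr, if_neg (ne_of_gt hy0), inv_inv]

lemma pquot_Fcf (l : List ℤ) (h : ∀ a ∈ l.tail, 1 ≤ a) (s : ℝ) (hs : 1 < s) :
    (∀ i (hi : i < l.length), pquot (Fcf l s) i = l[i]) ∧ cfIter (Fcf l s) l.length = s := by
  induction l with
  | nil => exact ⟨fun i hi => absurd hi (by simp), rfl⟩
  | cons a l ih =>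
    have hl : ∀ b ∈ l, 1 ≤ b := by simpa using h
    obtain ⟨hfl, hstep⟩ := floor_step_Fcf a l s hl hs
    have ihl := ih (fun b hb => hl b (List.mem_of_mem_tail hb))
    constructor
    · intro i hi
      match i with
      | 0 => simpa [pquot, cfIter] using hfl
      | Nat.succ j =>
        rw [pquot_succ, hstep]
        have hj : j < l.length := by simpa using hi
        simpa using ihl.1 j hj
    · rw [List.length_cons, cfIter_succ', hstep]; exact ihl.2

lemma cfEval_pquot : ∀ (n : ℕ) (x : ℝ), Int.fract (cfIter x n) = 0 →
    cfEval ((List.range (n + 1)).map (pquot x)) = x := by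
  intro n
  induction n with
  | zero =>
    intro x h
    have h' : Int.fract x = 0 := h
    have hx : x = (⌊x⌋ : ℝ) := by
      have := Int.floor_add_fract x
      rw [h'] at this; linarith
    simp [cfEval, pquot, cfIter]
    exact hx.symm
  | succ n ih =>
    intro x h
    rw [cfIter_succ'] at h
    have ihx := ih (cfStep x) h
    rw [List.range_succ_eq_map, List.map_cons, List.map_map]
    have hc : pquot x ∘ Nat.succ = pquot (cfStep x) := funext fun i => pquot_succ x i
    rw [hc, cfEval_cons _ _ (by simp), ihx, inv_cfStep]
    show (↑(pquot x 0) : ℝ) + _ = x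
    have : pquot x 0 = ⌊x⌋ := rfl
    rw [this]
    exact Int.floor_add_fract x

def cm : List ℤ → ℤ × ℤ × ℤ × ℤ
  | [] => (1, 0, 0, 1)
  | a :: l =>
    (a * (cm l).1 + (cm l).2.2.1, a * (cm l).2.1 + (cm l).2.2.2, (cm l).1, (cm l).2.1)

lemma cm_spec (l : List ℤ) (h0 : ∀ a ∈ l, 0 ≤ a) (h1 : ∀ a ∈ l.tail, 1 ≤ a) :
    (0 ≤ (cm l).1 ∧ 0 ≤ (cm l).2.1 ∧ 1 ≤ (cm l).1 + (cm l).2.1) ∧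
    (0 ≤ (cm l).2.2.1 ∧ 0 ≤ (cm l).2.2.2 ∧ 1 ≤ (cm l).2.2.1 + (cm l).2.2.2) ∧
    ((cm l).1 * (cm l).2.2.2 - (cm l).2.1 * (cm l).2.2.1 = 1 ∨
      (cm l).1 * (cm l).2.2.2 - (cm l).2.1 * (cm l).2.2.1 = -1) ∧
    ∀ s : ℝ, 0 < s →
      Fcf l s = (((cm l).1 : ℝ) * s + ((cm l).2.1 : ℝ)) /
        (((cm l).2.2.1 : ℝ) * s + ((cm l).2.2.2 : ℝ)) := by
  induction l with
  | nil =>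
    refine ⟨⟨by simp [cm], by simp [cm], by simp [cm]⟩,
      ⟨by simp [cm], by simp [cm], by simp [cm]⟩, Or.inl (by simp [cm]), ?_⟩
    intro s hs
    simp [Fcf_nil, cm]
  | cons a l ih =>
    have ha : 0 ≤ a := h0 a (by simp)
    have h0' : ∀ b ∈ l, 0 ≤ b := fun b hb => h0 b (by simp [hb])
    have h1l : ∀ b ∈ l, 1 ≤ b := by simpa using h1
    have h1' : ∀ b ∈ l.tail, 1 ≤ b := fun b hb => h1l b (List.mem_of_mem_tail hb)
    obtain ⟨⟨hP0, hP'0, hPP⟩, ⟨hQ0, hQ'0, hQQ⟩, hdet, hform⟩ := ih h0' h1'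
    simp only [cm]
    refine ⟨⟨by nlinarith [mul_nonneg ha hP0], by nlinarith [mul_nonneg ha hP'0],
      by nlinarith [mul_nonneg ha (by linarith : (0:ℤ) ≤ (cm l).1 + (cm l).2.1)]⟩,
      ⟨hP0, hP'0, hPP⟩, ?_, ?_⟩
    · rcases hdet with hd | hd
      · right; nlinarith [hd]
      · left; nlinarith [hd]
    · intro s hs
      have hPr : (0 : ℝ) ≤ ((cm l).1 : ℝ) := by exact_mod_cast hP0
      have hP'r : (0 : ℝ) ≤ ((cm l).2.1 : ℝ) := by exact_mod_cast hP'0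
      have hden : 0 < ((cm l).1 : ℝ) * s + ((cm l).2.1 : ℝ) := by
        rcases (by omega : 1 ≤ (cm l).1 ∨ ((cm l).1 = 0 ∧ 1 ≤ (cm l).2.1)) with hP | ⟨hP, hP'⟩
        · have : (1 : ℝ) ≤ ((cm l).1 : ℝ) := by exact_mod_cast hP
          nlinarith
        · have : (1 : ℝ) ≤ ((cm l).2.1 : ℝ) := by exact_mod_cast hP'
          nlinarith
      rw [Fcf_cons, hform s hs, inv_div]
      push_cast
      rw [eq_div_iff hden.ne', add_mul, div_mul_cancel₀ _ hden.ne']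
      ring


/-- `S(p/q)` is nonempty iff `q ≤ ⌊f₁/f_c⌋`. -/
theorem stmt_0 (f1 fc : ℝ) (hfc : 0 < fc) (hf : fc < f1)
    (p q : ℤ) (hq : 1 ≤ q) (hp : 0 ≤ p) (hcop : Int.gcd p q = 1)
    (n : ℕ) (A : ℕ → ℤ) (hA : IsCanonCF ((p : ℝ) / q) A n) :
    ({ν : ℝ |
        cfConv ν n = (p : ℝ) / q ∧ 1 ≤ pquot ν (n + 1) ∧
        |ν - (p : ℝ) / q| ≤ (fc / f1) / q ∧
        (fc / f1) / q ≤ 1 / ((pquot ν (n + 1) : ℝ) * (q : ℝ) ^ 2)}).Nonempty ↔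
      q ≤ ⌊f1 / fc⌋ := by
  obtain ⟨hA1, hA2, hA3⟩ := hA
  have hf1 : 0 < f1 := hfc.trans hf
  set x : ℝ := (p : ℝ) / q with hxdef
  set c : ℝ := fc / f1 with hcdef
  have hc0 : 0 < c := div_pos hfc hf1
  have hq0 : (0 : ℝ) < (q : ℝ) := by exact_mod_cast lt_of_lt_of_le one_pos hq
  have hq1 : (1 : ℝ) ≤ (q : ℝ) := by exact_mod_cast hq
  constructor
  · rintro ⟨ν, -, hx1, -, h4⟩
    rw [Int.le_floor]
    have hx1' : (1 : ℝ) ≤ (pquot ν (n + 1) : ℝ) := by exact_mod_cast hx1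
    have h5 : c / q ≤ 1 / (1 * (q : ℝ) ^ 2) := by
      refine h4.trans ?_
      apply one_div_le_one_div_of_le (by positivity)
      nlinarith
    rw [one_mul, div_le_div_iff₀ hq0 (by positivity)] at h5
    have hcq : c * q ≤ 1 := by nlinarith
    rw [le_div_iff₀ hfc]
    have hcf : c * f1 = fc := div_mul_cancel₀ _ (ne_of_gt hf1)
    nlinarith
  · intro hqf
    have hqfr : (q : ℝ) ≤ f1 / fc := Int.le_floor.1 hqf
    have hcq1 : c * q ≤ 1 := by
      rw [hcdef, div_mul_eq_mul_div, div_le_one hf1]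
      have := (le_div_iff₀ hfc).1 hqfr
      linarith
    have hcq0 : 0 < c * q := by positivity
    set t : ℝ := max (1 / (c * q)) (3 / 2) with htdef
    have ht32 : (3 / 2 : ℝ) ≤ t := le_max_right _ _
    have ht1 : 1 < t := lt_of_lt_of_le (by norm_num) ht32
    have ht0 : 0 < t := by linarith
    have htinv : t⁻¹ ≤ c * q := by
      have h := le_max_left (1 / (c * q)) (3 / 2 : ℝ)
      rw [← htdef, div_le_iff₀ hcq0] at h
      have h3 : t * t⁻¹ = 1 := mul_inv_cancel₀ (ne_of_gt ht0)
      nlinarith [inv_pos.2 ht0]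
    have hfloor_t : (⌊t⌋ : ℝ) ≤ 1 / (c * q) := by
      rcases le_total (3 / 2 : ℝ) (1 / (c * q)) with h | h
      · rw [htdef, max_eq_left h]; exact Int.floor_le _
      · have h32 : ⌊t⌋ = 1 := by
          rw [htdef, max_eq_right h]
          rw [Int.floor_eq_iff]
          norm_num
        rw [h32, le_div_iff₀ hcq0]
        push_cast; linarith
    have hxt1 : 1 ≤ ⌊t⌋ := Int.le_floor.2 (by exact_mod_cast ht1.le)
    have hxt0 : (0 : ℝ) < (⌊t⌋ : ℝ) := by
      exact_mod_cast lt_of_lt_of_le one_pos hxt1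
    have hx0 : 0 ≤ x := by
      rw [hxdef]
      exact div_nonneg (by exact_mod_cast hp) hq0.le
    have hgt : ∀ j < n, 1 < cfIter x (j + 1) := by
      intro j hj
      have hne := hA3 j hj
      have h0 : 0 < Int.fract (cfIter x j) := lt_of_le_of_ne (Int.fract_nonneg _) (Ne.symm hne)
      have h1' : Int.fract (cfIter x j) < 1 := Int.fract_lt_one _
      have hstep : cfIter x (j + 1) = (Int.fract (cfIter x j))⁻¹ := if_neg hne
      rw [hstep]
      exact one_lt_inv_iff₀.2 ⟨h0, h1'⟩
    have hquot_pos : ∀ j < n, 1 ≤ pquot x (j + 1) := by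
      intro j hj
      exact Int.le_floor.2 (by exact_mod_cast (hgt j hj).le)
    set L : List ℤ := (List.range (n + 1)).map (pquot x) with hLdef
    have hLtail : ∀ a ∈ L.tail, 1 ≤ a := by
      intro a ha
      rw [hLdef, List.range_succ_eq_map, List.map_cons, List.tail_cons, List.map_map] at ha
      obtain ⟨i, hi, rfl⟩ := List.mem_map.1 ha
      exact hquot_pos i (List.mem_range.1 hi)
    set ν : ℝ := Fcf L t with hνdef
    have hLlen : L.length = n + 1 := by simp [hLdef]
    obtain ⟨hGq, hGiter⟩ := pquot_Fcf L hLtail t ht1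
    have hpq : ∀ i, i ≤ n → pquot ν i = pquot x i := by
      intro i hi
      have hi' : i < L.length := by rw [hLlen]; omega
      rw [hGq i hi']
      simp [hLdef]
    have hpn1 : pquot ν (n + 1) = ⌊t⌋ := by
      have h := hGiter
      rw [hLlen] at h
      unfold pquot
      rw [h]
    have hconv : cfConv ν n = x := by
      unfold cfConv
      have hmapeq : (List.range (n + 1)).map (pquot ν) = L := by
        rw [hLdef]
        exact List.map_congr_left fun i hi => hpq i (by have := List.mem_range.1 hi; omega)
      rw [hmapeq, hLdef]
      exact cfEval_pquot n x hA2
    refine ⟨ν, hconv, ?_, ?_, ?_⟩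
    · rw [hpn1]; exact hxt1
    · -- |ν - x| ≤ c / q
      have htinv0 : 0 < t⁻¹ := inv_pos.2 ht0
      cases n with
      | zero =>
        have hfr : Int.fract x = 0 := hA2
        have hxint : x = (⌊x⌋ : ℝ) := by
          have h := Int.floor_add_fract x
          rw [hfr] at h; linarith
        have hqone : q = 1 := by
          have hpx : p = ⌊x⌋ * q := by
            have h : (⌊x⌋ : ℝ) * q = p := by
              rw [← hxint, hxdef]
              field_simp
            exact_mod_cast h.symm
          have hdvd : q ∣ p := ⟨⌊x⌋, by rw [hpx]; ring⟩
          have h1 : q ∣ (Int.gcd p q : ℤ) := Int.dvd_coe_gcd hdvd dvd_rfl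
          rw [hcop] at h1
          exact Int.eq_one_of_dvd_one (by omega) (by exact_mod_cast h1)
        have hqr1 : (q : ℝ) = 1 := by rw [hqone]; norm_num
        have hp0 : pquot x 0 = ⌊x⌋ := rfl
        have hLval : L = [⌊x⌋] := by rw [hLdef]; simp [List.range_succ, hp0]
        have hν0 : ν = (⌊x⌋ : ℝ) + t⁻¹ := by
          rw [hνdef, hLval, Fcf_cons, Fcf_nil]
        have habs : |ν - x| = t⁻¹ := by
          rw [hν0]
          have h2 : (⌊x⌋ : ℝ) + t⁻¹ - x = t⁻¹ := by rw [← hxint]; ring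
          rw [h2, abs_of_nonneg htinv0.le]
        rw [habs, hqr1, div_one]
        have hcq : c * (q : ℝ) = c := by rw [hqr1, mul_one]
        linarith [htinv]
      | succ k =>
        clear_value ν L t
        set m : List ℤ := (List.range (k + 1)).map (pquot x) with hmdef
        set aN : ℤ := pquot x (k + 1) with haNdef
        have hL_split : L = m ++ [aN] := by
          rw [hLdef, hmdef, List.range_succ, List.map_append]
          simp [haNdef]
        have haN2 : 2 ≤ aN := by
          have h1' : 1 < cfIter x (k + 1) := hgt k (by omega)
          have hint : cfIter x (k + 1) = (aN : ℝ) := by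
            have h2 := Int.floor_add_fract (cfIter x (k + 1))
            rw [hA2] at h2
            rw [haNdef]
            unfold pquot
            linarith
          rw [hint] at h1'
          have : (1 : ℤ) < aN := by exact_mod_cast h1'
          omega
        have haNr : (1 : ℝ) < (aN : ℝ) := by exact_mod_cast (by omega : (1:ℤ) < aN)
        have hs10 : (0 : ℝ) < (aN : ℝ) := by linarith
        have hs20 : (0 : ℝ) < (aN : ℝ) + t⁻¹ := by linarith
        have hm0 : ∀ a ∈ m, 0 ≤ a := by
          intro a ha
          rw [hmdef] at ha
          obtain ⟨i, hi, rfl⟩ := List.mem_map.1 ha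
          have hi' := List.mem_range.1 hi
          rcases i with _ | j
          · exact Int.floor_nonneg.2 hx0
          · exact le_trans (by norm_num) (hquot_pos j (by omega))
        have hm1 : ∀ a ∈ m.tail, 1 ≤ a := by
          intro a ha
          rw [hmdef, List.range_succ_eq_map, List.map_cons, List.tail_cons, List.map_map] at ha
          obtain ⟨i, hi, rfl⟩ := List.mem_map.1 ha
          have hi' := List.mem_range.1 hi
          exact hquot_pos i (by omega)
        obtain ⟨⟨hP0, hP'0, hPP⟩, ⟨hQ0, hQ'0, hQQ⟩, hdet, hform⟩ := cm_spec m hm0 hm1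
        set P : ℤ := (cm m).1 with hPdef
        set P' : ℤ := (cm m).2.1 with hP'def
        set Q : ℤ := (cm m).2.2.1 with hQdef
        set Q' : ℤ := (cm m).2.2.2 with hQ'def
        have hform1 := hform (aN : ℝ) hs10
        have hform2 := hform ((aN : ℝ) + t⁻¹) hs20
        have hx_eq : Fcf m ((aN : ℤ) : ℝ) = x := by
          rw [Fcf_eq_cfEval, ← hL_split, hLdef]
          exact cfEval_pquot (k + 1) x hA2
        have hν_eq : ν = Fcf m ((aN : ℝ) + t⁻¹) := by
          rw [hνdef, hL_split, Fcf_append, Fcf_cons, Fcf_nil]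
        set D : ℤ := Q * aN + Q' with hDdef
        set N : ℤ := P * aN + P' with hNdef
        clear_value N D P P' Q Q' aN m
        have hD1 : 1 ≤ D := by nlinarith
        have hD0R : (0 : ℝ) < (D : ℝ) := by exact_mod_cast (by omega : (0:ℤ) < D)
        have hden1 : (Q : ℝ) * (aN : ℝ) + (Q' : ℝ) = (D : ℝ) := by
          rw [hDdef]; push_cast; ring
        have hnum1 : (P : ℝ) * (aN : ℝ) + (P' : ℝ) = (N : ℝ) := by
          rw [hNdef]; push_cast; ring
        have hxND : x = (N : ℝ) / (D : ℝ) := by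
          rw [← hx_eq, hform1, hden1, hnum1]
        have hpD : p * D = N * q := by
          have h := hxND
          rw [hxdef, div_eq_div_iff (ne_of_gt hq0) (ne_of_gt hD0R)] at h
          exact_mod_cast h
        have hcopq : IsCoprime p q := Int.isCoprime_iff_gcd_eq_one.2 hcop
        have hqdvdD : q ∣ D := hcopq.symm.dvd_of_dvd_mul_left ⟨N, by rw [hpD]; ring⟩
        have hcoND : IsCoprime D N := by
          rcases hdet with hd | hd
          · exact ⟨P, -Q, by rw [hDdef, hNdef]; linear_combination hd⟩
          · exact ⟨-P, Q, by rw [hDdef, hNdef]; linear_combination -hd⟩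
        have hDdvdq : D ∣ q := hcoND.dvd_of_dvd_mul_left ⟨p, by rw [← hpD]; ring⟩
        have hqD : q = D := Int.dvd_antisymm (by omega) (by omega) hqdvdD hDdvdq
        have hqr2 : (Q : ℝ) * (aN : ℝ) + (Q' : ℝ) = (q : ℝ) := by
          rw [hden1, hqD]
        have hQr0 : (0 : ℝ) ≤ (Q : ℝ) := by exact_mod_cast hQ0
        have hd2q : (q : ℝ) ≤ (Q : ℝ) * ((aN : ℝ) + t⁻¹) + (Q' : ℝ) := by
          nlinarith [mul_nonneg hQr0 htinv0.le]
        have hd20 : (0 : ℝ) < (Q : ℝ) * ((aN : ℝ) + t⁻¹) + (Q' : ℝ) := lt_of_lt_of_le hq0 hd2q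
        have hkey : ν - x = t⁻¹ * ((P : ℝ) * Q' - (P' : ℝ) * Q) /
            ((q : ℝ) * ((Q : ℝ) * ((aN : ℝ) + t⁻¹) + (Q' : ℝ))) := by
          have hden1ne : (Q : ℝ) * (aN : ℝ) + (Q' : ℝ) ≠ 0 := by
            rw [hqr2]; exact ne_of_gt hq0
          rw [hν_eq, hform2, ← hx_eq, hform1, ← hqr2,
            div_sub_div _ _ (ne_of_gt hd20) hden1ne,
            div_eq_div_iff (mul_ne_zero (ne_of_gt hd20) hden1ne)
              (mul_ne_zero hden1ne (ne_of_gt hd20))]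
          ring
        have habs2 : |ν - x| = t⁻¹ / ((q : ℝ) * ((Q : ℝ) * ((aN : ℝ) + t⁻¹) + (Q' : ℝ))) := by
          rcases hdet with hd | hd
          · have hdr : (P : ℝ) * Q' - (P' : ℝ) * Q = 1 := by exact_mod_cast hd
            rw [hkey, hdr, mul_one,
              abs_of_nonneg (div_nonneg htinv0.le (mul_nonneg hq0.le hd20.le))]
          · have hdr : (P : ℝ) * Q' - (P' : ℝ) * Q = -1 := by exact_mod_cast hd
            rw [hkey, hdr, mul_neg_one, neg_div, abs_neg,
              abs_of_nonneg (div_nonneg htinv0.le (mul_nonneg hq0.le hd20.le))]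
        rw [habs2, div_le_div_iff₀ (mul_pos hq0 hd20) hq0]
        nlinarith [mul_nonneg (by linarith : (0:ℝ) ≤ c * q - t⁻¹) hq0.le,
          mul_nonneg (mul_pos hc0 hq0).le
            (by linarith : (0:ℝ) ≤ ((Q : ℝ) * ((aN : ℝ) + t⁻¹) + (Q' : ℝ)) - q)]
    · rw [hpn1]
      rw [div_le_div_iff₀ hq0 (by positivity)]
      have hk : c * q * (⌊t⌋ : ℝ) ≤ 1 := by
        have h := mul_le_mul_of_nonneg_left hfloor_t hcq0.le
        rwa [mul_one_div, div_self (ne_of_gt hcq0)] at h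
      nlinarith
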